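/- (Proposition 4.2, a posteriori error bound.) In the multistage setup, let π̂ = (π̂_0,…,π̂_{K−1}) be any maps with π̂_t(x) ∈ U(x) for all x ∈ Z_t, and let v^π̂ be the associated policy cost. Then for all t = 0,…,K and all x ∈ Z_t: 0 ≤ v^π̂_t(x) − v*_t(x) ≤ v^π̂_t(x) − v̂_t(x) + ∑_{k=t+1}^K L_k·δ. (No convexity of v*_t or v̂_t is assumed; only the cellwise Lipschitz continuity of v*_k encoded by L_k.) -/

import Mathlib

open scoped BigOperators

lemma exists_simplex_weights {n M : ℕ} (node : Fin M → EuclideanSpace ℝ (Fin n))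
    (s : Set (Fin M)) (y : EuclideanSpace ℝ (Fin n))
    (hy : y ∈ convexHull ℝ (node '' s)) :
    ∃ γ : Fin M → ℝ, γ ∈ stdSimplex ℝ (Fin M) ∧ (∀ i, i ∉ s → γ i = 0) ∧
      y = ∑ i, γ i • node i := by
  classical
  have hsne : s.Nonempty := by
    have h1 : (node '' s).Nonempty := convexHull_nonempty_iff.1 ⟨y, hy⟩
    exact h1.of_image
  obtain ⟨i0, hi0⟩ := hsne
  set F : Finset (Fin M) := (Set.toFinite s).toFinset with hF
  have himg : node '' s = ↑(F.image node) := by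
    rw [Finset.coe_image, hF, Set.Finite.coe_toFinset]
  rw [himg, Finset.mem_convexHull'] at hy
  obtain ⟨w, hw0, hw1, hwc⟩ := hy
  have hc : ∀ z ∈ F.image node, ∃ i, i ∈ s ∧ node i = z := by
    intro z hz
    simp only [Finset.mem_image, hF, Set.Finite.mem_toFinset] at hz
    obtain ⟨i, his, rfl⟩ := hz; exact ⟨i, his, rfl⟩
  set c : EuclideanSpace ℝ (Fin n) → Fin M := fun z =>
    if h : ∃ i, i ∈ s ∧ node i = z then h.choose else i0 with hcdef
  have hcs : ∀ z ∈ F.image node, c z ∈ s ∧ node (c z) = z := by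
    intro z hz
    have h : ∃ i, i ∈ s ∧ node i = z := hc z hz
    simp only [hcdef, dif_pos h]
    exact h.choose_spec
  refine ⟨fun i => ∑ z ∈ F.image node, if c z = i then w z else 0, ⟨?_, ?_⟩, ?_, ?_⟩
  · intro i
    exact Finset.sum_nonneg fun z hz => by
      by_cases h : c z = i <;> simp [h, hw0 z hz]
  · rw [Finset.sum_comm]
    simpa [Finset.sum_ite_eq] using hw1
  · intro i hi
    apply Finset.sum_eq_zero
    intro z hz
    rw [if_neg]
    rintro rfl
    exact hi (hcs z hz).1
  · have hinner : ∀ z ∈ F.image node,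
        ∑ i, (if c z = i then w z else 0) • node i = w z • z := by
      intro z hz
      rw [Finset.sum_eq_single (c z)]
      · simp [(hcs z hz).2]
      · intro i _ hne
        rw [if_neg (fun h => hne h.symm), zero_smul]
      · simp
    calc y = ∑ z ∈ F.image node, w z • z := hwc.symm
      _ = ∑ z ∈ F.image node, ∑ i, (if c z = i then w z else 0) • node i :=
          (Finset.sum_congr rfl hinner).symm
      _ = ∑ i, ∑ z ∈ F.image node, (if c z = i then w z else 0) • node i := Finset.sum_comm
      _ = ∑ i, (∑ z ∈ F.image node, if c z = i then w z else 0) • node i := by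
          simp [Finset.sum_smul]

/-- Proposition 4.2 (a posteriori error bound). -/
theorem stmt_12 {n m N M J K : ℕ}
    (U : EuclideanSpace ℝ (Fin n) → Set (EuclideanSpace ℝ (Fin m)))
    (r : EuclideanSpace ℝ (Fin n) → EuclideanSpace ℝ (Fin m) → ℝ)
    (f : EuclideanSpace ℝ (Fin n) → EuclideanSpace ℝ (Fin m) → Fin N → EuclideanSpace ℝ (Fin n))
    (p : Fin N → ℝ) (hp : ∀ s, 0 ≤ p s) (hpsum : ∑ s, p s = 1)
    (node : Fin M → EuclideanSpace ℝ (Fin n))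
    (cell : Fin J → Set (Fin M))
    (δ : ℝ)
    (hδ : ∀ j : Fin J, ∀ i ∈ cell j, ∀ k ∈ cell j, ‖node i - node k‖ ≤ δ)
    (Z : ℕ → Set (EuclideanSpace ℝ (Fin n)))
    (hZconv : ∀ t ≤ K, Convex ℝ (Z t))
    (hZcpt : ∀ t ≤ K, IsCompact (Z t))
    (hZmono : ∀ t, t < K → Z t ⊆ Z (t + 1))
    (hUne : ∀ t ≤ K, ∀ x ∈ Z t, (U x).Nonempty)
    (hfZ : ∀ t < K, ∀ x ∈ Z t, ∀ u ∈ U x, ∀ s, f x u s ∈ Z (t + 1))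
    (q : EuclideanSpace ℝ (Fin n) → ℝ)
    (hZcells : ∀ t ≤ K, Z t =
      ⋃ j ∈ {j : Fin J | convexHull ℝ (node '' cell j) ⊆ Z t}, convexHull ℝ (node '' cell j))
    (vstar : ℕ → EuclideanSpace ℝ (Fin n) → ℝ)
    (hvstarK : ∀ x ∈ Z K, vstar K x = q x)
    (hvstar : ∀ t < K, ∀ x ∈ Z t, IsLeast
      {z : ℝ | ∃ u ∈ U x, z = r x u + ∑ s, p s * vstar (t + 1) (f x u s)} (vstar t x))
    (vhat : ℕ → EuclideanSpace ℝ (Fin n) → ℝ)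
    (hvhatK : ∀ x ∈ Z K, vhat K x = q x)
    (hvhat : ∀ t < K, ∀ x ∈ Z t, IsLeast
      {z : ℝ | ∃ u ∈ U x, ∃ γ : Fin N → Fin M → ℝ,
        (∀ s, γ s ∈ stdSimplex ℝ (Fin M)) ∧
        (∀ s i, node i ∉ Z (t + 1) → γ s i = 0) ∧
        (∀ s, f x u s = ∑ i, γ s i • node i) ∧
        z = r x u + ∑ s, ∑ i, p s * γ s i * vhat (t + 1) (node i)} (vhat t x))
    (L : ℕ → ℝ) (hL : ∀ k, 0 ≤ L k)
    (hvstarlip : ∀ k ≤ K, ∀ j : Fin J, convexHull ℝ (node '' cell j) ⊆ Z k →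
      ∀ y ∈ convexHull ℝ (node '' cell j), ∀ y' ∈ convexHull ℝ (node '' cell j),
        |vstar k y - vstar k y'| ≤ L k * ‖y - y'‖)
    (pol : ℕ → EuclideanSpace ℝ (Fin n) → EuclideanSpace ℝ (Fin m))
    (hpolU : ∀ t < K, ∀ x ∈ Z t, pol t x ∈ U x)
    (vpi : ℕ → EuclideanSpace ℝ (Fin n) → ℝ)
    (hvpiK : ∀ x ∈ Z K, vpi K x = q x)
    (hvpi : ∀ t < K, ∀ x ∈ Z t,
      vpi t x = r x (pol t x) + ∑ s, p s * vpi (t + 1) (f x (pol t x) s))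
 :
    ∀ t ≤ K, ∀ x ∈ Z t,
      0 ≤ vpi t x - vstar t x ∧
      vpi t x - vstar t x ≤
        vpi t x - vhat t x + (∑ k ∈ Finset.Icc (t + 1) K, L k) * δ := by
  classical
  have key : ∀ d t, t + d = K → ∀ x ∈ Z t,
      vstar t x ≤ vpi t x ∧
      vhat t x ≤ vstar t x + (∑ k ∈ Finset.Icc (t + 1) K, L k) * δ := by
    intro d
    induction d with
    | zero =>
      intro t ht x hx
      have htK : t = K := by omega
      subst htK
      constructor
      · rw [hvstarK x hx, hvpiK x hx]
      · rw [hvstarK x hx, hvhatK x hx]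
        simp [Finset.Icc_eq_empty_of_lt (Nat.lt_succ_self _)]
    | succ d ih =>
      intro t ht x hx
      have hlt : t < K := by omega
      have ht1 : t + 1 + d = K := by omega
      have ht1K : t + 1 ≤ K := by omega
      constructor
      · have hpol := hpolU t hlt x hx
        have hle := (hvstar t hlt x hx).2 ⟨pol t x, hpol, rfl⟩
        rw [hvpi t hlt x hx]
        refine hle.trans ?_
        apply add_le_add_right
        apply Finset.sum_le_sum
        intro s _
        have hz := hfZ t hlt x hx _ hpol s
        exact mul_le_mul_of_nonneg_left ((ih (t+1) ht1 _ hz).1) (hp s)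
      · obtain ⟨u, hu, hval⟩ := (hvstar t hlt x hx).1
        have hcell : ∀ s : Fin N, ∃ j : Fin J,
            convexHull ℝ (node '' cell j) ⊆ Z (t+1) ∧
            f x u s ∈ convexHull ℝ (node '' cell j) := by
          intro s
          have hz : f x u s ∈ Z (t+1) := hfZ t hlt x hx u hu s
          rw [hZcells (t+1) ht1K] at hz
          simp only [Set.mem_iUnion, Set.mem_setOf_eq] at hz
          obtain ⟨j, hj1, hj2⟩ := hz
          exact ⟨j, hj1, hj2⟩
        choose j hjZ hjmem using hcell
        have hγ := fun s => exists_simplex_weights node (cell (j s)) _ (hjmem s)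
        choose γ hγsplx hγsupp hγrepr using hγ
        have hγ0 : ∀ s i, 0 ≤ γ s i := fun s i => (hγsplx s).1 i
        have hγ1 : ∀ s, ∑ i, γ s i = 1 := fun s => (hγsplx s).2
        have hmemcell : ∀ s i, γ s i ≠ 0 → i ∈ cell (j s) := by
          intro s i h
          by_contra hm
          exact h (hγsupp s i hm)
        have hbound : ∀ s : Fin N,
            ∑ i, γ s i * vhat (t+1) (node i) ≤
              vstar (t+1) (f x u s) + (L (t+1) + ∑ k ∈ Finset.Icc (t+2) K, L k) * δ := by
          intro s
          have step1 : ∀ i, γ s i * vhat (t+1) (node i) ≤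
              γ s i * (vstar (t+1) (node i) + (∑ k ∈ Finset.Icc (t+2) K, L k) * δ) := by
            intro i
            rcases eq_or_lt_of_le (hγ0 s i) with h0 | hpos
            · rw [← h0]; simp
            · have hmem : i ∈ cell (j s) := hmemcell s i hpos.ne'
              have hnode : node i ∈ Z (t+1) :=
                hjZ s (subset_convexHull ℝ _ ⟨i, hmem, rfl⟩)
              have h2 := (ih (t+1) ht1 _ hnode).2
              exact mul_le_mul_of_nonneg_left h2 (le_of_lt hpos)
          have step2 : ∀ i, γ s i * vstar (t+1) (node i) ≤
              γ s i * vstar (t+1) (f x u s) + γ s i * (L (t+1) * δ) := by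
            intro i
            rcases eq_or_lt_of_le (hγ0 s i) with h0 | hpos
            · rw [← h0]; simp
            · have hmem : i ∈ cell (j s) := hmemcell s i hpos.ne'
              have hnodeh : node i ∈ convexHull ℝ (node '' cell (j s)) :=
                subset_convexHull ℝ _ ⟨i, hmem, rfl⟩
              have hdist : ‖node i - f x u s‖ ≤ δ := by
                have hball : convexHull ℝ (node '' cell (j s)) ⊆
                    Metric.closedBall (node i) δ := by
                  apply convexHull_min ?_ (convex_closedBall _ _)
                  rintro z ⟨k, hk, rfl⟩
                  rw [Metric.mem_closedBall, dist_eq_norm]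
                  exact hδ (j s) k hk i hmem
                have h3 := hball (hjmem s)
                rw [Metric.mem_closedBall, dist_eq_norm, norm_sub_rev] at h3
                exact h3
              have hlip := hvstarlip (t+1) ht1K (j s) (hjZ s) _ hnodeh _ (hjmem s)
              have h1 : vstar (t+1) (node i) ≤ vstar (t+1) (f x u s) + L (t+1) * δ := by
                have h4 : vstar (t+1) (node i) - vstar (t+1) (f x u s) ≤ L (t+1) * δ :=
                  (le_abs_self _).trans
                    (hlip.trans (mul_le_mul_of_nonneg_left hdist (hL (t+1))))
                linarith
              rw [← mul_add]
              exact mul_le_mul_of_nonneg_left h1 (le_of_lt hpos)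
          calc ∑ i, γ s i * vhat (t+1) (node i)
              ≤ ∑ i, γ s i * (vstar (t+1) (node i) + (∑ k ∈ Finset.Icc (t+2) K, L k) * δ) :=
                Finset.sum_le_sum fun i _ => step1 i
            _ = ∑ i, γ s i * vstar (t+1) (node i) + (∑ k ∈ Finset.Icc (t+2) K, L k) * δ := by
                simp [mul_add, Finset.sum_add_distrib, ← Finset.sum_mul, hγ1 s]
            _ ≤ vstar (t+1) (f x u s) + L (t+1) * δ + (∑ k ∈ Finset.Icc (t+2) K, L k) * δ := by
                have h5 := Finset.sum_le_sum fun i (_ : i ∈ Finset.univ) => step2 i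
                simp only [Finset.sum_add_distrib, ← Finset.sum_mul, hγ1 s, one_mul] at h5
                linarith
            _ = vstar (t+1) (f x u s) + (L (t+1) + ∑ k ∈ Finset.Icc (t+2) K, L k) * δ := by
                ring
        have hcand : vhat t x ≤ r x u + ∑ s, ∑ i, p s * γ s i * vhat (t+1) (node i) := by
          apply (hvhat t hlt x hx).2
          refine ⟨u, hu, γ, hγsplx, ?_, hγrepr, rfl⟩
          intro s i hni
          by_contra h
          have hmem : i ∈ cell (j s) := hmemcell s i h
          exact hni (hjZ s (subset_convexHull ℝ _ ⟨i, hmem, rfl⟩))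
        have hsum : ∑ s, ∑ i, p s * γ s i * vhat (t+1) (node i) ≤
            ∑ s, p s * vstar (t+1) (f x u s) +
              (L (t+1) + ∑ k ∈ Finset.Icc (t+2) K, L k) * δ := by
          have h1 : ∀ s : Fin N, ∑ i, p s * γ s i * vhat (t+1) (node i) ≤
              p s * (vstar (t+1) (f x u s) +
                (L (t+1) + ∑ k ∈ Finset.Icc (t+2) K, L k) * δ) := by
            intro s
            have heq : ∑ i, p s * γ s i * vhat (t+1) (node i)
                = p s * ∑ i, γ s i * vhat (t+1) (node i) := by
              rw [Finset.mul_sum]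
              exact Finset.sum_congr rfl fun i _ => by ring
            rw [heq]
            exact mul_le_mul_of_nonneg_left (hbound s) (hp s)
          calc ∑ s, ∑ i, p s * γ s i * vhat (t+1) (node i)
              ≤ ∑ s, p s * (vstar (t+1) (f x u s) +
                  (L (t+1) + ∑ k ∈ Finset.Icc (t+2) K, L k) * δ) :=
                Finset.sum_le_sum fun s _ => h1 s
            _ = ∑ s, p s * vstar (t+1) (f x u s) +
                  (L (t+1) + ∑ k ∈ Finset.Icc (t+2) K, L k) * δ := by
                simp [mul_add, Finset.sum_add_distrib, ← Finset.sum_mul, hpsum]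
        have hIcc : ∑ k ∈ Finset.Icc (t+1) K, L k
            = L (t+1) + ∑ k ∈ Finset.Icc (t+2) K, L k := by
          rw [Finset.Icc_eq_cons_Ioc ht1K, Finset.sum_cons, ← Finset.Icc_add_one_left_eq_Ioc]; rfl
        rw [hIcc]
        calc vhat t x ≤ r x u + ∑ s, ∑ i, p s * γ s i * vhat (t+1) (node i) := hcand
          _ ≤ r x u + (∑ s, p s * vstar (t+1) (f x u s) +
                (L (t+1) + ∑ k ∈ Finset.Icc (t+2) K, L k) * δ) := add_le_add_right hsum _
          _ = vstar t x + (L (t+1) + ∑ k ∈ Finset.Icc (t+2) K, L k) * δ := by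
              rw [hval]; ring
  intro t htK x hx
  obtain ⟨h1, h2⟩ := key (K - t) t (by omega) x hx
  exact ⟨by linarith, by linarith⟩
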